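/- Part (II) of Theorem 1: Let F be a multi-valued propositional formula of a signature σ such that for every constant c in σ the domain Dom(c) has at least two elements. Then a propositional interpretation J of σ^prop is a propositional stable model of F^prop ∧ UEC_σ if and only if J = I^prop for some multi-valued stable model I of F. -/

import Mathlib

/-! Core definitions: multi-valued propositional formulas under the stable model
semantics (Bartholomew–Lee), propositional formulas under the stable model
semantics (Ferraris), and the translation between them. -/

/-- Multi-valued propositional formulas over constants `σ` and values `V`.
`¬F` abbreviates `F → ⊥`, and `G ← F` denotes `F → G`. -/
inductive MVF (σ V : Type) : Type where
  | bot : MVF σ V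
  | atom : σ → V → MVF σ V
  | and : MVF σ V → MVF σ V → MVF σ V
  | or : MVF σ V → MVF σ V → MVF σ V
  | imp : MVF σ V → MVF σ V → MVF σ V
  deriving DecidableEq

namespace MVF

variable {σ V : Type}

/-- `¬F` is `F → ⊥`. -/
def neg (F : MVF σ V) : MVF σ V := .imp F .bot

/-- Classical satisfaction of a multi-valued formula by `I : σ → V`. -/
def sat (I : σ → V) : MVF σ V → Prop
  | .bot => False
  | .atom c v => I c = v
  | .and F G => F.sat I ∧ G.sat I
  | .or F G => F.sat I ∨ G.sat I
  | .imp F G => F.sat I → G.sat I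

open Classical in
/-- The reduct `F^I`: replace each maximal subformula not satisfied by `I` with `⊥`. -/
noncomputable def reduct (I : σ → V) : MVF σ V → MVF σ V
  | .bot => .bot
  | .atom c v => if I c = v then .atom c v else .bot
  | .and F G => if (MVF.and F G).sat I then .and (F.reduct I) (G.reduct I) else .bot
  | .or F G => if (MVF.or F G).sat I then .or (F.reduct I) (G.reduct I) else .bot
  | .imp F G => if (MVF.imp F G).sat I then .imp (F.reduct I) (G.reduct I) else .bot

/-- A formula is a formula *of the signature* `Dom` when every atom `c=v`
occurring in it satisfies `v ∈ Dom c`. -/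
def wf (Dom : σ → Finset V) : MVF σ V → Prop
  | .bot => True
  | .atom c v => v ∈ Dom c
  | .and F G => F.wf Dom ∧ G.wf Dom
  | .or F G => F.wf Dom ∧ G.wf Dom
  | .imp F G => F.wf Dom ∧ G.wf Dom

/-- The set of constants occurring in a formula. -/
def consts : MVF σ V → Set σ
  | .bot => ∅
  | .atom c _ => {c}
  | .and F G => F.consts ∪ G.consts
  | .or F G => F.consts ∪ G.consts
  | .imp F G => F.consts ∪ G.consts

end MVF

/-- `I` is a multi-valued interpretation of the signature whose domains are given
by `Dom` (it maps every constant into its domain). -/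
def isInterp {σ V : Type} (Dom : σ → Finset V) (I : σ → V) : Prop := ∀ c, I c ∈ Dom c

/-- `I` is a multi-valued stable model of `F`: `I` is the unique multi-valued
interpretation of the signature satisfying the reduct `F^I`. -/
def isMVStable {σ V : Type} (Dom : σ → Finset V) (F : MVF σ V) (I : σ → V) : Prop :=
  isInterp Dom I ∧ (F.reduct I).sat I ∧
    ∀ J : σ → V, isInterp Dom J → (F.reduct I).sat J → J = I

/-- Stable models of a set of multi-valued formulas (a finite set of formulas
is identified with the conjunction of its members). -/
def isMVStableSet {σ V : Type} (Dom : σ → Finset V) (Γ : Set (MVF σ V)) (I : σ → V) : Prop :=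
  isInterp Dom I ∧ (∀ F ∈ Γ, (F.reduct I).sat I) ∧
    ∀ J : σ → V, isInterp Dom J → (∀ F ∈ Γ, (F.reduct I).sat J) → J = I

/-- Propositional formulas over a set `A` of propositional atoms. -/
inductive PF (A : Type) : Type where
  | bot : PF A
  | atom : A → PF A
  | and : PF A → PF A → PF A
  | or : PF A → PF A → PF A
  | imp : PF A → PF A → PF A
  deriving DecidableEq

namespace PF

variable {A : Type}

/-- `¬F` is `F → ⊥`. -/
def neg (F : PF A) : PF A := .imp F .bot

/-- Classical satisfaction of a propositional formula by `J : A → Prop`. -/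
def sat (J : A → Prop) : PF A → Prop
  | .bot => False
  | .atom a => J a
  | .and F G => F.sat J ∧ G.sat J
  | .or F G => F.sat J ∨ G.sat J
  | .imp F G => F.sat J → G.sat J

open Classical in
/-- The reduct `F^J`: replace each maximal subformula not satisfied by `J` with `⊥`. -/
noncomputable def reduct (J : A → Prop) : PF A → PF A
  | .bot => .bot
  | .atom a => if J a then .atom a else .bot
  | .and F G => if (PF.and F G).sat J then .and (F.reduct J) (G.reduct J) else .bot
  | .or F G => if (PF.or F G).sat J then .or (F.reduct J) (G.reduct J) else .bot
  | .imp F G => if (PF.imp F G).sat J then .imp (F.reduct J) (G.reduct J) else .bot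

end PF

/-- `J` is a propositional stable model of `F`: `J` satisfies the reduct `F^J` and is
minimal, with respect to the set of atoms it makes true, among the interpretations
satisfying `F^J`. -/
def isPStable {A : Type} (F : PF A) (J : A → Prop) : Prop :=
  (F.reduct J).sat J ∧
    ∀ K : A → Prop, (F.reduct J).sat K → (∀ a, K a → J a) → ∀ a, J a ↔ K a

/-- Propositional stable models of a set of propositional formulas (identified
with the conjunction of its members). -/
def isPStableSet {A : Type} (Γ : Set (PF A)) (J : A → Prop) : Prop :=
  (∀ F ∈ Γ, (F.reduct J).sat J) ∧
    ∀ K : A → Prop, (∀ F ∈ Γ, (F.reduct J).sat K) → (∀ a, K a → J a) → ∀ a, J a ↔ K a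

/-- The atoms of the propositional signature `σ^prop`: expressions `c(v)` for a
constant `c` and a value `v ∈ Dom c`. -/
abbrev PAtom {σ V : Type} (Dom : σ → Finset V) : Type := {p : σ × V // p.2 ∈ Dom p.1}

/-- The translation `F^prop`, replacing each multi-valued atom `c=v` by the
propositional atom `c(v)`. -/
def MVF.toProp {σ V : Type} [DecidableEq V] (Dom : σ → Finset V) :
    MVF σ V → PF (PAtom Dom)
  | .bot => .bot
  | .atom c v => if h : v ∈ Dom c then .atom ⟨(c, v), h⟩ else .bot
  | .and F G => .and (F.toProp Dom) (G.toProp Dom)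
  | .or F G => .or (F.toProp Dom) (G.toProp Dom)
  | .imp F G => .imp (F.toProp Dom) (G.toProp Dom)

/-- The translation `I^prop` of a multi-valued interpretation: it makes the
propositional atom `c(v)` true iff `I(c) = v`. -/
def toPropInterp {σ V : Type} (Dom : σ → Finset V) (I : σ → V) : PAtom Dom → Prop :=
  fun p => I p.1.1 = p.1.2

/-- Conjunction of a list of propositional formulas. -/
def listConj {A : Type} : List (PF A) → PF A
  | [] => .imp .bot .bot
  | F :: Fs => .and F (listConj Fs)

/-- Disjunction of a list of propositional formulas. -/
def listDisj {A : Type} : List (PF A) → PF A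
  | [] => .bot
  | F :: Fs => .or F (listDisj Fs)

/-- The existence and uniqueness constraint `UEC(c)`: the conjunction of
`⊥ ← c(v) ∧ c(v')` for all distinct `v, v' ∈ Dom c` together with
`⊥ ← ¬⋁_{v ∈ Dom c} c(v)`. -/
noncomputable def UECc {σ V : Type} [DecidableEq V] (Dom : σ → Finset V) (c : σ) : PF (PAtom Dom) :=
  .and
    (listConj ((Dom c).attach.toList.flatMap fun v =>
      (Dom c).attach.toList.filterMap fun w =>
        if v.1 = w.1 then none
        else some (.imp (.and (.atom ⟨(c, v.1), v.2⟩) (.atom ⟨(c, w.1), w.2⟩)) .bot)))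
    (.imp (PF.neg (listDisj ((Dom c).attach.toList.map fun v =>
      PF.atom ⟨(c, v.1), v.2⟩))) .bot)

/-- `UEC_σ`: the conjunction of `UEC(c)` over all constants `c` of the signature. -/
noncomputable def UECsig {σ V : Type} [Fintype σ] [DecidableEq V] (Dom : σ → Finset V) :
    PF (PAtom Dom) :=
  listConj ((Finset.univ : Finset σ).toList.map (UECc Dom))

section Aux

variable {σ V : Type}

/-- The set of (multi-valued) atoms occurring in a formula. -/
def MVF.atoms : MVF σ V → Set (σ × V)
  | .bot => ∅
  | .atom c v => {(c, v)}
  | .and F G => F.atoms ∪ G.atoms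
  | .or F G => F.atoms ∪ G.atoms
  | .imp F G => F.atoms ∪ G.atoms

lemma MVF.sat_reduct_self (I : σ → V) : ∀ G : MVF σ V, (G.reduct I).sat I ↔ G.sat I := by
  intro G
  induction G with
  | bot => simp [MVF.reduct]
  | atom c v =>
      by_cases h : I c = v
      · simp [MVF.reduct, if_pos h, MVF.sat]
      · simp [MVF.reduct, if_neg h, MVF.sat, h]
  | and F G ihF ihG =>
      by_cases h : (MVF.and F G).sat I
      · rw [show (MVF.and F G).reduct I = .and (F.reduct I) (G.reduct I) from by
          simp only [MVF.reduct, if_pos h]]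
        simp only [MVF.sat]
        rw [ihF, ihG]
      · rw [show (MVF.and F G).reduct I = .bot from by simp only [MVF.reduct, if_neg h]]
        exact iff_of_false id h
  | or F G ihF ihG =>
      by_cases h : (MVF.or F G).sat I
      · rw [show (MVF.or F G).reduct I = .or (F.reduct I) (G.reduct I) from by
          simp only [MVF.reduct, if_pos h]]
        simp only [MVF.sat]
        rw [ihF, ihG]
      · rw [show (MVF.or F G).reduct I = .bot from by simp only [MVF.reduct, if_neg h]]
        exact iff_of_false id h
  | imp F G ihF ihG =>
      by_cases h : (MVF.imp F G).sat I
      · rw [show (MVF.imp F G).reduct I = .imp (F.reduct I) (G.reduct I) from by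
          simp only [MVF.reduct, if_pos h]]
        simp only [MVF.sat]
        rw [ihF, ihG]
      · rw [show (MVF.imp F G).reduct I = .bot from by simp only [MVF.reduct, if_neg h]]
        exact iff_of_false id h

lemma PF.sat_reduct_self {A : Type} (J : A → Prop) : ∀ G : PF A, (G.reduct J).sat J ↔ G.sat J := by
  intro G
  induction G with
  | bot => simp [PF.reduct]
  | atom a =>
      by_cases h : J a
      · simp [PF.reduct, if_pos h, PF.sat, h]
      · simp [PF.reduct, if_neg h, PF.sat, h]
  | and F G ihF ihG =>
      by_cases h : (PF.and F G).sat J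
      · rw [show (PF.and F G).reduct J = .and (F.reduct J) (G.reduct J) from by
          simp only [PF.reduct, if_pos h]]
        simp only [PF.sat]
        rw [ihF, ihG]
      · rw [show (PF.and F G).reduct J = .bot from by simp only [PF.reduct, if_neg h]]
        exact iff_of_false id h
  | or F G ihF ihG =>
      by_cases h : (PF.or F G).sat J
      · rw [show (PF.or F G).reduct J = .or (F.reduct J) (G.reduct J) from by
          simp only [PF.reduct, if_pos h]]
        simp only [PF.sat]
        rw [ihF, ihG]
      · rw [show (PF.or F G).reduct J = .bot from by simp only [PF.reduct, if_neg h]]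
        exact iff_of_false id h
  | imp F G ihF ihG =>
      by_cases h : (PF.imp F G).sat J
      · rw [show (PF.imp F G).reduct J = .imp (F.reduct J) (G.reduct J) from by
          simp only [PF.reduct, if_pos h]]
        simp only [PF.sat]
        rw [ihF, ihG]
      · rw [show (PF.imp F G).reduct J = .bot from by simp only [PF.reduct, if_neg h]]
        exact iff_of_false id h

lemma PF.reduct_of_not_sat {A : Type} {J : A → Prop} {G : PF A} (h : ¬ G.sat J) :
    G.reduct J = .bot := by
  cases G with
  | bot => rfl
  | atom a => exact if_neg (show ¬ J a from h)
  | and F G => simp [PF.reduct, if_neg h]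
  | or F G => simp [PF.reduct, if_neg h]
  | imp F G => simp [PF.reduct, if_neg h]


lemma PF.reduct_and_eq {A : Type} {J : A → Prop} {F G : PF A} (h : (PF.and F G).sat J) :
    (PF.and F G).reduct J = .and (F.reduct J) (G.reduct J) := by
  simp only [PF.reduct, if_pos h]

lemma PF.reduct_imp_eq {A : Type} {J : A → Prop} {F G : PF A} (h : (PF.imp F G).sat J) :
    (PF.imp F G).reduct J = .imp (F.reduct J) (G.reduct J) := by
  simp only [PF.reduct, if_pos h]

lemma MVF.atoms_reduct {I : σ → V} :
    ∀ {G : MVF σ V} {c v}, (c, v) ∈ (G.reduct I).atoms → I c = v ∧ (c, v) ∈ G.atoms := by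
  intro G
  induction G with
  | bot => intro c v h; simp [MVF.reduct, MVF.atoms] at h
  | atom c' v' =>
      intro c v h
      by_cases h' : I c' = v'
      · simp only [MVF.reduct, if_pos h', MVF.atoms, Set.mem_singleton_iff, Prod.mk.injEq] at h
        obtain ⟨rfl, rfl⟩ := h
        exact ⟨h', rfl⟩
      · simp [MVF.reduct, if_neg h', MVF.atoms] at h
  | and F G ihF ihG =>
      intro c v h
      by_cases h' : (MVF.and F G).sat I
      · simp only [MVF.reduct, if_pos h', MVF.atoms, Set.mem_union] at h
        rcases h with h | h
        · exact ⟨(ihF h).1, Or.inl (ihF h).2⟩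
        · exact ⟨(ihG h).1, Or.inr (ihG h).2⟩
      · simp [MVF.reduct, if_neg h', MVF.atoms] at h
  | or F G ihF ihG =>
      intro c v h
      by_cases h' : (MVF.or F G).sat I
      · simp only [MVF.reduct, if_pos h', MVF.atoms, Set.mem_union] at h
        rcases h with h | h
        · exact ⟨(ihF h).1, Or.inl (ihF h).2⟩
        · exact ⟨(ihG h).1, Or.inr (ihG h).2⟩
      · simp [MVF.reduct, if_neg h', MVF.atoms] at h
  | imp F G ihF ihG =>
      intro c v h
      by_cases h' : (MVF.imp F G).sat I
      · simp only [MVF.reduct, if_pos h', MVF.atoms, Set.mem_union] at h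
        rcases h with h | h
        · exact ⟨(ihF h).1, Or.inl (ihF h).2⟩
        · exact ⟨(ihG h).1, Or.inr (ihG h).2⟩
      · simp [MVF.reduct, if_neg h', MVF.atoms] at h

lemma MVF.wf_of_atoms {Dom : σ → Finset V} :
    ∀ {G : MVF σ V}, G.wf Dom → ∀ {c v}, (c, v) ∈ G.atoms → v ∈ Dom c := by
  intro G
  induction G with
  | bot => intro _ c v h; simp [MVF.atoms] at h
  | atom c' v' =>
      intro hwf c v h
      simp only [MVF.atoms, Set.mem_singleton_iff, Prod.mk.injEq] at h
      obtain ⟨rfl, rfl⟩ := h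
      exact hwf
  | and F G ihF ihG =>
      intro hwf c v h
      rcases h with h | h
      exacts [ihF hwf.1 h, ihG hwf.2 h]
  | or F G ihF ihG =>
      intro hwf c v h
      rcases h with h | h
      exacts [ihF hwf.1 h, ihG hwf.2 h]
  | imp F G ihF ihG =>
      intro hwf c v h
      rcases h with h | h
      exacts [ihF hwf.1 h, ihG hwf.2 h]

/-- Satisfaction transfer between a multi-valued formula and its translation. -/
lemma sat_toProp_iff [DecidableEq V] {Dom : σ → Finset V}
    {K : PAtom Dom → Prop} {J' : σ → V} :
    ∀ {G : MVF σ V},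
    (∀ c v (h : v ∈ Dom c), (c, v) ∈ G.atoms → (K ⟨(c, v), h⟩ ↔ J' c = v)) →
    (∀ c v, (c, v) ∈ G.atoms → v ∉ Dom c → J' c ≠ v) →
    ((G.toProp Dom).sat K ↔ G.sat J') := by
  intro G
  induction G with
  | bot => intro _ _; simp [MVF.toProp, PF.sat, MVF.sat]
  | atom c v =>
      intro H H2
      by_cases h : v ∈ Dom c
      · simp only [MVF.toProp, dif_pos h, PF.sat, MVF.sat]
        exact H c v h rfl
      · simp only [MVF.toProp, dif_neg h, PF.sat, MVF.sat]
        exact iff_of_false (fun x => x) (H2 c v rfl h)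
  | and F G ihF ihG =>
      intro H H2
      have h1 := ihF (fun c v h hm => H c v h (Or.inl hm)) (fun c v hm => H2 c v (Or.inl hm))
      have h2 := ihG (fun c v h hm => H c v h (Or.inr hm)) (fun c v hm => H2 c v (Or.inr hm))
      simp only [MVF.toProp, PF.sat, MVF.sat]; rw [h1, h2]
  | or F G ihF ihG =>
      intro H H2
      have h1 := ihF (fun c v h hm => H c v h (Or.inl hm)) (fun c v hm => H2 c v (Or.inl hm))
      have h2 := ihG (fun c v h hm => H c v h (Or.inr hm)) (fun c v hm => H2 c v (Or.inr hm))
      simp only [MVF.toProp, PF.sat, MVF.sat]; rw [h1, h2]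
  | imp F G ihF ihG =>
      intro H H2
      have h1 := ihF (fun c v h hm => H c v h (Or.inl hm)) (fun c v hm => H2 c v (Or.inl hm))
      have h2 := ihG (fun c v h hm => H c v h (Or.inr hm)) (fun c v hm => H2 c v (Or.inr hm))
      simp only [MVF.toProp, PF.sat, MVF.sat]; rw [h1, h2]

lemma sat_toProp_interp [DecidableEq V] {Dom : σ → Finset V} {I : σ → V}
    (hI : isInterp Dom I) (G : MVF σ V) :
    ((G.toProp Dom).sat (toPropInterp Dom I) ↔ G.sat I) := by
  refine sat_toProp_iff (fun c v h _ => Iff.rfl) (fun c v _ hv hc => ?_)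
  exact hv (hc ▸ hI c)

/-- The propositional reduct of the translation equals the translation of the
multi-valued reduct. -/
lemma reduct_toProp [DecidableEq V] {Dom : σ → Finset V} {I : σ → V}
    (hI : isInterp Dom I) :
    ∀ G : MVF σ V, (G.toProp Dom).reduct (toPropInterp Dom I) = (G.reduct I).toProp Dom := by
  intro G
  induction G with
  | bot => rfl
  | atom c v =>
      by_cases h : v ∈ Dom c
      · by_cases h' : I c = v
        · simp only [MVF.toProp, dif_pos h, PF.reduct, MVF.reduct, if_pos h']
          have : toPropInterp Dom I ⟨(c, v), h⟩ := h'
          try rw [if_pos this]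
          try simp [MVF.toProp, dif_pos h]
        · simp only [MVF.toProp, dif_pos h, PF.reduct, MVF.reduct, if_neg h']
          have : ¬ toPropInterp Dom I ⟨(c, v), h⟩ := h'
          try rw [if_neg this]
          try rfl
      · have h' : I c ≠ v := fun hc => h (hc ▸ hI c)
        simp only [MVF.toProp, dif_neg h, PF.reduct, MVF.reduct, if_neg h']
        try rfl
  | and F G ihF ihG =>
      by_cases h : (MVF.and F G).sat I
      · have hs : ((MVF.and F G).toProp Dom).sat (toPropInterp Dom I) :=
          (sat_toProp_interp hI _).mpr h
        simp only [MVF.toProp, MVF.reduct, if_pos h] at *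
        simp only [PF.reduct, if_pos hs, ihF, ihG]
      · have hs : ¬ ((MVF.and F G).toProp Dom).sat (toPropInterp Dom I) := by
          rw [sat_toProp_interp hI]; exact h
        simp only [MVF.toProp, MVF.reduct, if_neg h] at *
        rw [PF.reduct_of_not_sat hs]
        try rfl
  | or F G ihF ihG =>
      by_cases h : (MVF.or F G).sat I
      · have hs : ((MVF.or F G).toProp Dom).sat (toPropInterp Dom I) :=
          (sat_toProp_interp hI _).mpr h
        simp only [MVF.toProp, MVF.reduct, if_pos h] at *
        simp only [PF.reduct, if_pos hs, ihF, ihG]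
      · have hs : ¬ ((MVF.or F G).toProp Dom).sat (toPropInterp Dom I) := by
          rw [sat_toProp_interp hI]; exact h
        simp only [MVF.toProp, MVF.reduct, if_neg h] at *
        rw [PF.reduct_of_not_sat hs]
        try rfl
  | imp F G ihF ihG =>
      by_cases h : (MVF.imp F G).sat I
      · have hs : ((MVF.imp F G).toProp Dom).sat (toPropInterp Dom I) :=
          (sat_toProp_interp hI _).mpr h
        simp only [MVF.toProp, MVF.reduct, if_pos h] at *
        simp only [PF.reduct, if_pos hs, ihF, ihG]
      · have hs : ¬ ((MVF.imp F G).toProp Dom).sat (toPropInterp Dom I) := by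
          rw [sat_toProp_interp hI]; exact h
        simp only [MVF.toProp, MVF.reduct, if_neg h] at *
        rw [PF.reduct_of_not_sat hs]
        try rfl

lemma listConj_sat {A : Type} (J : A → Prop) :
    ∀ L : List (PF A), (listConj L).sat J ↔ ∀ F ∈ L, F.sat J := by
  intro L
  induction L with
  | nil => simp [listConj, PF.sat]
  | cons F Fs ih => simp [listConj, PF.sat, ih]

lemma listDisj_sat {A : Type} (J : A → Prop) :
    ∀ L : List (PF A), (listDisj L).sat J ↔ ∃ F ∈ L, F.sat J := by
  intro L
  induction L with
  | nil => simp [listDisj, PF.sat]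
  | cons F Fs ih => simp [listDisj, PF.sat, ih]

lemma listConj_reduct_sat {A : Type} {J K : A → Prop} :
    ∀ {L : List (PF A)}, (∀ F ∈ L, F.sat J) → (∀ F ∈ L, (F.reduct J).sat K) →
      ((listConj L).reduct J).sat K := by
  intro L
  induction L with
  | nil =>
      intro _ _
      have hs : (PF.imp PF.bot PF.bot).sat J := fun x => x
      show ((PF.imp PF.bot PF.bot).reduct J).sat K
      rw [PF.reduct_imp_eq hs]
      exact fun x => x
  | cons F Fs ih =>
      intro h1 h2
      have hs : (PF.and F (listConj Fs)).sat J :=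
        ⟨h1 F List.mem_cons_self,
         (listConj_sat J Fs).mpr fun G hG => h1 G (List.mem_cons_of_mem _ hG)⟩
      show ((PF.and F (listConj Fs)).reduct J).sat K
      rw [PF.reduct_and_eq hs]
      exact ⟨h2 F List.mem_cons_self,
        ih (fun G hG => h1 G (List.mem_cons_of_mem _ hG))
           (fun G hG => h2 G (List.mem_cons_of_mem _ hG))⟩

lemma constraint_reduct_sat {A : Type} {J K : A → Prop} {P : PF A}
    (h : ¬ P.sat J) : ((PF.imp P .bot).reduct J).sat K := by
  have hs : (PF.imp P .bot).sat J := fun hp => absurd hp h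
  rw [PF.reduct_imp_eq hs, PF.reduct_of_not_sat h]
  exact fun hb => (hb : False).elim

lemma UECc_elim [DecidableEq V] {Dom : σ → Finset V} {c : σ} {J : PAtom Dom → Prop}
    (h : (UECc Dom c).sat J) :
    (∃ v, ∃ hv : v ∈ Dom c, J ⟨(c, v), hv⟩) ∧
      (∀ v w (hv : v ∈ Dom c) (hw : w ∈ Dom c), v ≠ w →
        J ⟨(c, v), hv⟩ → J ⟨(c, w), hw⟩ → False) := by
  obtain ⟨hA, hB⟩ := h
  constructor
  · by_contra hne
    push_neg at hne
    refine hB (fun hd => ?_)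
    rw [listDisj_sat] at hd
    obtain ⟨G, hG, hGsat⟩ := hd
    rw [List.mem_map] at hG
    obtain ⟨v, hv, rfl⟩ := hG
    exact hne v.1 v.2 hGsat
  · intro v w hv hw hne hJv hJw
    rw [listConj_sat] at hA
    have hmem : (PF.imp (PF.and (PF.atom (⟨(c, v), hv⟩ : PAtom Dom))
        (PF.atom (⟨(c, w), hw⟩ : PAtom Dom))) PF.bot) ∈
        ((Dom c).attach.toList.flatMap fun v' =>
          (Dom c).attach.toList.filterMap fun w' =>
            if v'.1 = w'.1 then none
            else some (.imp (.and (.atom ⟨(c, v'.1), v'.2⟩) (.atom ⟨(c, w'.1), w'.2⟩)) .bot)) := by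
      rw [List.mem_flatMap]
      refine ⟨⟨v, hv⟩, by simp [Finset.mem_toList], ?_⟩
      rw [List.mem_filterMap]
      refine ⟨⟨w, hw⟩, by simp [Finset.mem_toList], ?_⟩
      rw [if_neg hne]
    exact hA _ hmem ⟨hJv, hJw⟩

lemma UECc_sat_of_interp [DecidableEq V] {Dom : σ → Finset V} {I : σ → V}
    (hI : isInterp Dom I) (c : σ) : (UECc Dom c).sat (toPropInterp Dom I) := by
  constructor
  · rw [listConj_sat]
    intro G hG
    rw [List.mem_flatMap] at hG
    obtain ⟨v, _, hG⟩ := hG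
    rw [List.mem_filterMap] at hG
    obtain ⟨w, _, hG⟩ := hG
    by_cases hvw : v.1 = w.1
    · rw [if_pos hvw] at hG; exact absurd hG (by simp)
    · rw [if_neg hvw] at hG
      obtain rfl := Option.some_injective _ hG
      rintro ⟨h1, h2⟩
      exact hvw ((show I c = v.1 from h1).symm.trans (show I c = w.1 from h2))
  · intro hnd
    refine hnd ?_
    rw [listDisj_sat]
    exact ⟨.atom ⟨(c, I c), hI c⟩, List.mem_map.mpr ⟨⟨I c, hI c⟩,
      by simp [Finset.mem_toList], rfl⟩, rfl⟩

lemma UECc_reduct_sat [DecidableEq V] {Dom : σ → Finset V} {c : σ} {J K : PAtom Dom → Prop}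
    (h : (UECc Dom c).sat J) : ((UECc Dom c).reduct J).sat K := by
  obtain ⟨hA, hB⟩ := h
  show ((PF.and _ _).reduct J).sat K
  rw [PF.reduct_and_eq ⟨hA, hB⟩]
  refine ⟨listConj_reduct_sat ((listConj_sat J _).mp hA) (fun G hG => ?_),
    constraint_reduct_sat (fun hd => hB hd)⟩
  rw [List.mem_flatMap] at hG
  obtain ⟨v, hvmem, hG⟩ := hG
  rw [List.mem_filterMap] at hG
  obtain ⟨w, hwmem, hG⟩ := hG
  by_cases hvw : v.1 = w.1
  · rw [if_pos hvw] at hG; exact absurd hG (by simp)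
  · rw [if_neg hvw] at hG
    obtain rfl := Option.some_injective _ hG
    have hGsat := (listConj_sat J _).mp hA _ (by
      rw [List.mem_flatMap]
      refine ⟨v, hvmem, ?_⟩
      rw [List.mem_filterMap]
      refine ⟨w, hwmem, ?_⟩
      rw [if_neg hvw])
    exact constraint_reduct_sat (fun hb => hGsat hb)

lemma UECsig_sat_iff {σ V : Type} [Fintype σ] [DecidableEq V] {Dom : σ → Finset V}
    {J : PAtom Dom → Prop} :
    (UECsig Dom).sat J ↔ ∀ c, (UECc Dom c).sat J := by
  rw [UECsig, listConj_sat]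
  constructor
  · intro h c
    exact h _ (List.mem_map.mpr ⟨c, by simp [Finset.mem_toList], rfl⟩)
  · rintro h G hG
    rw [List.mem_map] at hG
    obtain ⟨c, _, rfl⟩ := hG
    exact h c

lemma UECsig_reduct_sat {σ V : Type} [Fintype σ] [DecidableEq V] {Dom : σ → Finset V}
    {J K : PAtom Dom → Prop} (h : (UECsig Dom).sat J) : ((UECsig Dom).reduct J).sat K := by
  rw [UECsig, listConj_sat] at h
  refine listConj_reduct_sat h (fun G hG => ?_)
  rw [List.mem_map] at hG
  obtain ⟨c, _, rfl⟩ := hG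
  exact UECc_reduct_sat (h _ (List.mem_map.mpr ⟨c, by simp [Finset.mem_toList], rfl⟩))

lemma MVF.wf_reduct {Dom : σ → Finset V} {I : σ → V} :
    ∀ {G : MVF σ V}, G.wf Dom → (G.reduct I).wf Dom := by
  intro G
  induction G with
  | bot => intro h; exact h
  | atom c v =>
      intro h
      by_cases h' : I c = v
      · simpa [MVF.reduct, if_pos h', MVF.wf] using h
      · simp [MVF.reduct, if_neg h', MVF.wf]
  | and F G ihF ihG =>
      intro h
      by_cases h' : (MVF.and F G).sat I
      · simp only [MVF.reduct, if_pos h', MVF.wf]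
        exact ⟨ihF h.1, ihG h.2⟩
      · simp [MVF.reduct, if_neg h', MVF.wf]
  | or F G ihF ihG =>
      intro h
      by_cases h' : (MVF.or F G).sat I
      · simp only [MVF.reduct, if_pos h', MVF.wf]
        exact ⟨ihF h.1, ihG h.2⟩
      · simp [MVF.reduct, if_neg h', MVF.wf]
  | imp F G ihF ihG =>
      intro h
      by_cases h' : (MVF.imp F G).sat I
      · simp only [MVF.reduct, if_pos h', MVF.wf]
        exact ⟨ihF h.1, ihG h.2⟩
      · simp [MVF.reduct, if_neg h', MVF.wf]

end Aux

/-- **Theorem 1, Part (II)**: Let `F` be a multi-valued propositional formula of a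
signature `σ` such that every constant's domain has at least two elements. A
propositional interpretation `J` of `σ^prop` is a propositional stable model of
`F^prop ∧ UEC_σ` iff `J = I^prop` for some multi-valued stable model `I` of `F`. -/
theorem theorem1_part_II {σ V : Type} [Fintype σ] [DecidableEq V]
    (Dom : σ → Finset V) (hdom : ∀ c : σ, 2 ≤ (Dom c).card)
    (F : MVF σ V) (hF : F.wf Dom)
    (J : PAtom Dom → Prop) :
    isPStable (PF.and (F.toProp Dom) (UECsig Dom)) J ↔
      ∃ I : σ → V, isMVStable Dom F I ∧ J = toPropInterp Dom I := by
  classical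
  constructor
  · rintro ⟨h1, h2⟩
    have hsat : (PF.and (F.toProp Dom) (UECsig Dom)).sat J := (PF.sat_reduct_self J _).mp h1
    have hUEC : ∀ c, (UECc Dom c).sat J := UECsig_sat_iff.mp hsat.2
    have hex : ∀ c, ∃ v, ∃ hv : v ∈ Dom c, J ⟨(c, v), hv⟩ := fun c => (UECc_elim (hUEC c)).1
    have huniq := fun c => (UECc_elim (hUEC c)).2
    choose I hImem hIJ using hex
    have hIint : isInterp Dom I := hImem
    have hJI : J = toPropInterp Dom I := by
      funext a
      obtain ⟨⟨c, v⟩, hv⟩ := a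
      apply propext
      constructor
      · intro hJa
        by_contra hne
        exact huniq c v (I c) hv (hImem c) (fun e => hne e.symm) hJa (hIJ c)
      · intro hIv
        have e : I c = v := hIv
        subst e
        exact hIJ c
    refine ⟨I, ⟨hIint, ?_, ?_⟩, hJI⟩
    · have h1' := h1
      rw [PF.reduct_and_eq hsat] at h1'
      have hf : ((F.toProp Dom).reduct J).sat J := h1'.1
      rw [hJI, reduct_toProp hIint] at hf
      exact (sat_toProp_interp hIint _).mp hf
    · intro J'' hJ''int hJ''sat
      set K : PAtom Dom → Prop := fun a => J a ∧ J'' a.1.1 = a.1.2 with hK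
      have hKsat : ((PF.and (F.toProp Dom) (UECsig Dom)).reduct J).sat K := by
        rw [PF.reduct_and_eq hsat]
        refine ⟨?_, UECsig_reduct_sat hsat.2⟩
        rw [hJI, reduct_toProp hIint]
        refine (sat_toProp_iff ?_ ?_).mpr hJ''sat
        · intro c v h hm
          have hv := (MVF.atoms_reduct hm).1
          constructor
          · rintro ⟨_, hx⟩; exact hx
          · intro hx
            refine ⟨?_, hx⟩
            rw [hJI]; exact hv
        · intro c v hm hnv
          exact absurd (MVF.wf_of_atoms (MVF.wf_reduct hF) hm) hnv
      have hmin := h2 K hKsat (fun a ha => ha.1)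
      funext c
      exact ((hmin ⟨(c, I c), hImem c⟩).mp (hIJ c)).2
  · rintro ⟨I, ⟨hIint, hIred, hIuniq⟩, rfl⟩
    have hFsat : (F.toProp Dom).sat (toPropInterp Dom I) :=
      (sat_toProp_interp hIint _).mpr ((MVF.sat_reduct_self I F).mp hIred)
    have hUEC : (UECsig Dom).sat (toPropInterp Dom I) :=
      UECsig_sat_iff.mpr (fun c => UECc_sat_of_interp hIint c)
    have hsat : (PF.and (F.toProp Dom) (UECsig Dom)).sat (toPropInterp Dom I) := ⟨hFsat, hUEC⟩
    refine ⟨(PF.sat_reduct_self _ _).mpr hsat, ?_⟩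
    intro K hKsat hKle
    rw [PF.reduct_and_eq hsat] at hKsat
    have hKF : ((F.reduct I).toProp Dom).sat K := by
      have h := hKsat.1
      rwa [reduct_toProp hIint] at h
    have hw : ∀ c, ∃ w ∈ Dom c, w ≠ I c := fun c =>
      Finset.exists_mem_ne (by have := hdom c; omega) (I c)
    set J' : σ → V := fun c => if K ⟨(c, I c), hIint c⟩ then I c else (hw c).choose with hJ'
    have hJ'int : isInterp Dom J' := by
      intro c
      by_cases h : K ⟨(c, I c), hIint c⟩
      · simp only [hJ', if_pos h]; exact hIint c
      · simp only [hJ', if_neg h]; exact (hw c).choose_spec.1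
    have hJ'sat : (F.reduct I).sat J' := by
      refine (sat_toProp_iff ?_ ?_).mp hKF
      · intro c v h hm
        have hv := (MVF.atoms_reduct hm).1
        subst hv
        by_cases hk : K ⟨(c, I c), hIint c⟩
        · simp only [hJ', if_pos hk]
          exact iff_of_true hk trivial
        · simp only [hJ', if_neg hk]
          exact iff_of_false hk (hw c).choose_spec.2
      · intro c v hm hnv
        exact absurd (MVF.wf_of_atoms (MVF.wf_reduct hF) hm) hnv
    have hJ'I : J' = I := hIuniq J' hJ'int hJ'sat
    have hKall : ∀ c, K ⟨(c, I c), hIint c⟩ := by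
      intro c
      by_contra hk
      have hx : J' c = (hw c).choose := by simp only [hJ', if_neg hk]
      rw [hJ'I] at hx
      exact (hw c).choose_spec.2 hx.symm
    intro a
    obtain ⟨⟨c, v⟩, hv⟩ := a
    by_cases h : I c = v
    · cases h
      exact iff_of_true rfl (hKall c)
    · exact iff_of_false h (fun hKa => h (hKle _ hKa))
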